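/- A finite-dimensional G-graded algebra A is left σ-faithful (for all g ∈ G and a ∈ A_g, A_{σg^{-1}}·a = 0 implies a = 0) if and only if rank C_g = |J_g| for every g ∈ G. -/

import Mathlib

open Finset

lemma aux_rank_iff {K m n : Type} [Field K] [Fintype m] [Fintype n] (M : Matrix m n K) :
    M.rank = Fintype.card n ↔ ∀ x : n → K, M.mulVec x = 0 → x = 0 := by
  have h1 := LinearMap.finrank_range_add_finrank_ker M.mulVecLin
  rw [Module.finrank_fintype_fun_eq_card] at h1
  rw [Matrix.rank]
  constructor
  · intro h x hx
    have hker : Module.finrank K (LinearMap.ker M.mulVecLin) = 0 := by omega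
    have hb : LinearMap.ker M.mulVecLin = ⊥ := Submodule.finrank_eq_zero.mp hker
    have hxk : x ∈ LinearMap.ker M.mulVecLin := by
      simpa [LinearMap.mem_ker, Matrix.mulVecLin_apply] using hx
    simpa [hb] using hxk
  · intro h
    have hb : LinearMap.ker M.mulVecLin = ⊥ := by
      apply LinearMap.ker_eq_bot'.mpr
      intro x hx
      exact h x (by simpa [Matrix.mulVecLin_apply] using hx)
    rw [hb, finrank_bot] at h1
    omega

lemma aux_sum {K J : Type} [AddCommMonoid K] [Fintype J] (p : J → Prop) [DecidablePred p]
    (f : J → K) (h0 : ∀ i, ¬ p i → f i = 0) :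
    ∑ i : J, f i = ∑ j : {i // p i}, f j.1 := by
  rw [← Finset.sum_filter_of_ne (s := Finset.univ) (p := p)
    (fun x _ hx => by by_contra hp; exact hx (h0 x hp))]
  exact Finset.sum_subtype _ (by simp) f

/-- **Proposition on σ-faithfulness.**  A finite-dimensional `G`-graded algebra `A` is
left σ-faithful (for all `g ∈ G` and `a ∈ A_g`, `A_{σg⁻¹}·a = 0` implies `a = 0`) if and
only if `rank C_g = |J_g|` for every `g ∈ G`. -/
theorem stmt15 (K : Type) [Field K] (G : Type) [Group G] [DecidableEq G]
    (A : Type) [Ring A] [Algebra K A] (𝒜 : G → Submodule K A)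
    (h_one : (1 : A) ∈ 𝒜 1)
    (h_mul : ∀ {g h : G} {a b : A}, a ∈ 𝒜 g → b ∈ 𝒜 h → a * b ∈ 𝒜 (g * h))
    (J : Type) [Fintype J] [DecidableEq J]
    (deg : J → G) (e : Module.Basis J K A)
    (h𝒜 : ∀ g : G, 𝒜 g = Submodule.span K (e '' {i | deg i = g}))
    (σ : G)
    (c : J → J → J → K) (hc : ∀ i j ℓ, c i j ℓ = e.repr (e i * e j) ℓ) :
    (∀ g : G, ∀ a ∈ 𝒜 g, (∀ b ∈ 𝒜 (σ * g⁻¹), b * a = 0) → a = 0) ↔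
    (∀ g : G,
      (Matrix.of fun (p : {r : J // deg r = σ * g⁻¹} × {ℓ : J // deg ℓ = σ})
          (j : {j : J // deg j = g}) => c p.1.1 j.1 p.2.1).rank
        = Fintype.card {j : J // deg j = g}) := by
  -- basis vectors of degree g lie in 𝒜 g
  have hmem : ∀ (g : G) (i : J), deg i = g → e i ∈ 𝒜 g := by
    intro g i hi
    rw [h𝒜]
    exact Submodule.subset_span ⟨i, hi, rfl⟩
  -- coordinates of elements of 𝒜 g vanish outside degree g
  have suppB : ∀ (g : G) (a : A), a ∈ 𝒜 g → ∀ i : J, deg i ≠ g → e.repr a i = 0 := by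
    intro g a ha i hi
    have hle : 𝒜 g ≤ LinearMap.ker (e.coord i) := by
      rw [h𝒜]
      apply Submodule.span_le.2
      rintro _ ⟨j, hj, rfl⟩
      simp only [SetLike.mem_coe, LinearMap.mem_ker, Module.Basis.coord_apply, Module.Basis.repr_self]
      rw [Finsupp.single_apply, if_neg]
      intro hji; exact hi (hji ▸ hj)
    simpa [Module.Basis.coord_apply] using hle ha
  -- coordinates of e r * a
  have reprA : ∀ (r : J) (a : A) (ℓ : J),
      e.repr (e r * a) ℓ = ∑ j : J, e.repr a j * c r j ℓ := by
    intro r a ℓ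
    conv_lhs => rw [← e.sum_repr a]
    rw [Finset.mul_sum]
    simp_rw [mul_smul_comm]
    rw [map_sum, Finsupp.finset_sum_apply]
    simp_rw [map_smul, Finsupp.smul_apply, smul_eq_mul, hc]
  -- membership of linear combinations
  have memA : ∀ (g : G) (x : {j : J // deg j = g} → K),
      (∑ j : {j : J // deg j = g}, x j • e j.1) ∈ 𝒜 g := by
    intro g x
    exact Submodule.sum_mem _ fun j _ => Submodule.smul_mem _ _ (hmem g j.1 j.2)
  -- coordinates of linear combinations
  have reprx : ∀ (g : G) (x : {j : J // deg j = g} → K) (i : J),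
      e.repr (∑ j : {j : J // deg j = g}, x j • e j.1) i
        = if h : deg i = g then x ⟨i, h⟩ else 0 := by
    intro g x i
    rw [map_sum, Finsupp.finset_sum_apply]
    simp_rw [map_smul, Finsupp.smul_apply, Module.Basis.repr_self, Finsupp.single_apply, smul_eq_mul]
    by_cases h : deg i = g
    · rw [dif_pos h]
      rw [Finset.sum_eq_single (⟨i, h⟩ : {j : J // deg j = g})]
      · simp
      · intro b _ hb
        rw [if_neg, mul_zero]
        intro hbi
        exact hb (Subtype.ext hbi)
      · intro hm; exact absurd (Finset.mem_univ _) hm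
    · rw [dif_neg h]
      apply Finset.sum_eq_zero
      intro j _
      rw [if_neg, mul_zero]
      intro hji
      exact h (hji ▸ j.2)
  -- the key equivalence
  have key : ∀ (g : G) (x : {j : J // deg j = g} → K),
      ((Matrix.of fun (p : {r : J // deg r = σ * g⁻¹} × {ℓ : J // deg ℓ = σ})
          (j : {j : J // deg j = g}) => c p.1.1 j.1 p.2.1).mulVec x = 0
        ↔ ∀ b ∈ 𝒜 (σ * g⁻¹), b * (∑ j : {j : J // deg j = g}, x j • e j.1) = 0) := by
    intro g x
    set a : A := ∑ j : {j : J // deg j = g}, x j • e j.1 with ha_def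
    have entry : ∀ (r : {r : J // deg r = σ * g⁻¹}) (ℓ : {ℓ : J // deg ℓ = σ}),
        ((Matrix.of fun (p : {r : J // deg r = σ * g⁻¹} × {ℓ : J // deg ℓ = σ})
          (j : {j : J // deg j = g}) => c p.1.1 j.1 p.2.1).mulVec x) (r, ℓ)
          = e.repr (e r.1 * a) ℓ.1 := by
      intro r ℓ
      rw [reprA]
      rw [aux_sum (fun i => deg i = g) (fun j => e.repr a j * c r.1 j ℓ.1)
        (fun i hi => by simp only [ha_def, reprx]; rw [dif_neg hi, zero_mul])]
      simp only [Matrix.mulVec, dotProduct, Matrix.of_apply]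
      apply Finset.sum_congr rfl
      intro j _
      simp only [ha_def, reprx]
      rw [dif_pos j.2, Subtype.coe_eta, mul_comm]
    constructor
    · intro hx
      have hgen : ∀ r : J, deg r = σ * g⁻¹ → e r * a = 0 := by
        intro r hr
        apply e.repr.injective
        ext ℓ
        simp only [map_zero, Finsupp.zero_apply]
        by_cases hℓ : deg ℓ = σ
        · have h0 := congrFun hx (⟨r, hr⟩, ⟨ℓ, hℓ⟩)
          rw [entry ⟨r, hr⟩ ⟨ℓ, hℓ⟩] at h0
          simpa using h0
        · refine suppB σ _ ?_ ℓ hℓ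
          have := h_mul (hmem _ r hr) (memA g x)
          simpa [inv_mul_cancel_right] using this
      intro b hb
      have hle : 𝒜 (σ * g⁻¹) ≤ LinearMap.ker (LinearMap.mulRight K a) := by
        rw [h𝒜]
        apply Submodule.span_le.2
        rintro _ ⟨r, hr, rfl⟩
        simpa [LinearMap.mem_ker] using hgen r hr
      simpa using hle hb
    · intro hb
      funext p
      obtain ⟨r, ℓ⟩ := p
      rw [entry r ℓ]
      rw [hb (e r.1) (hmem _ r.1 r.2)]
      simp
  constructor
  · intro H g
    rw [aux_rank_iff]
    intro x hx
    have hb := (key g x).mp hx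
    have ha0 := H g _ (memA g x) hb
    funext j
    obtain ⟨j, hj⟩ := j
    have := reprx g x j
    rw [ha0, dif_pos hj] at this
    simpa using this.symm
  · intro H g a ha hb
    have hax : a = ∑ j : {j : J // deg j = g}, e.repr a j.1 • e j.1 := by
      conv_lhs => rw [← e.sum_repr a]
      exact aux_sum (fun i => deg i = g) _
        (fun i hi => by rw [suppB g a ha i hi, zero_smul])
    have hx0 : (fun j : {j : J // deg j = g} => e.repr a j.1) = 0 := by
      refine (aux_rank_iff _).mp (H g) _ ?_
      refine (key g _).mpr ?_
      intro b hbmem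
      rw [← hax]
      exact hb b hbmem
    rw [hax]
    apply Finset.sum_eq_zero
    intro j _
    rw [congrFun hx0 j]
    simp
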